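/- If Y_ω solves Aᵀ Y_ω + Y_ω A + F_ω* Cᵀ C + Cᵀ C F_ω = 0, then trace(Bᵀ Y_ω B) = trace((1/2π) ∫_{-ω}^{ω} G₁*(jν) G₁(jν) dν), where G₁(s) = C(sI - A)^{-1} B. -/

import Mathlib

open Matrix

/-- The resolvent `(jνI - A)⁻¹`. -/
noncomputable def resolvMat {n : ℕ} (A : Matrix (Fin n) (Fin n) ℂ) (ν : ℝ) :
    Matrix (Fin n) (Fin n) ℂ :=
  ((Complex.I * (ν : ℂ)) • (1 : Matrix (Fin n) (Fin n) ℂ) - A)⁻¹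

/-- `F_ω = (1/2π) ∫_{-ω}^{ω} (jνI - A)⁻¹ dν` (entrywise integral). -/
noncomputable def Ffl {n : ℕ} (A : Matrix (Fin n) (Fin n) ℂ) (ω : ℝ) :
    Matrix (Fin n) (Fin n) ℂ :=
  Matrix.of fun i j => (1 / (2 * (Real.pi : ℂ))) * ∫ ν in (-ω)..ω, resolvMat A ν i j


open MeasureTheory Polynomial intervalIntegral

section SpectrumAux

variable {k : ℕ}

lemma charpoly_eval_eq_det (M : Matrix (Fin k) (Fin k) ℂ) (μ : ℂ) :
    M.charpoly.eval μ = (Matrix.scalar (Fin k) μ - M).det := by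
  rw [Matrix.charpoly, _root_.eval_det, Matrix.matPolyEquiv_charmatrix]
  simp

lemma mem_spectrum_of_isRoot_charpoly (M : Matrix (Fin k) (Fin k) ℂ) {μ : ℂ}
    (h : M.charpoly.IsRoot μ) : μ ∈ spectrum ℂ M := by
  rw [spectrum.mem_iff]
  intro hunit
  rw [Matrix.isUnit_iff_isUnit_det] at hunit
  have hscalar : algebraMap ℂ (Matrix (Fin k) (Fin k) ℂ) μ = Matrix.scalar (Fin k) μ := by
    ext i j
    simp [Matrix.algebraMap_matrix_apply, Matrix.scalar_apply, Matrix.diagonal_apply]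
  rw [hscalar] at hunit
  rw [IsRoot, charpoly_eval_eq_det] at h
  rw [h] at hunit
  exact (not_isUnit_zero hunit)

lemma spectrum_transpose_eq (M : Matrix (Fin k) (Fin k) ℂ) :
    spectrum ℂ Mᵀ = spectrum ℂ M := by
  ext μ
  simp only [spectrum.mem_iff, not_iff_not, Matrix.isUnit_iff_isUnit_det]
  have : algebraMap ℂ (Matrix (Fin k) (Fin k) ℂ) μ - Mᵀ
      = (algebraMap ℂ (Matrix (Fin k) (Fin k) ℂ) μ - M)ᵀ := by
    rw [Matrix.transpose_sub, Algebra.algebraMap_eq_smul_one, Matrix.transpose_smul,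
      Matrix.transpose_one]
  rw [this, Matrix.det_transpose]

lemma sylvester_unique (T U D : Matrix (Fin k) (Fin k) ℂ)
    (hdisj : ∀ μ ∈ spectrum ℂ T, μ ∉ spectrum ℂ U)
    (h : T * D = D * U) : D = 0 := by
  have hpow : ∀ j : ℕ, T ^ j * D = D * U ^ j := by
    intro j
    induction j with
    | zero => simp
    | succ j ih => rw [pow_succ, pow_succ, mul_assoc, h, ← mul_assoc, ih, mul_assoc]
  have haeval : ∀ q : ℂ[X], aeval T q * D = D * aeval U q := by
    intro q
    induction q using Polynomial.induction_on' with
    | add p q hp hq => simp only [map_add, add_mul, mul_add, hp, hq]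
    | monomial j c =>
      simp only [aeval_monomial, Algebra.algebraMap_eq_smul_one, smul_mul_assoc, one_mul,
        mul_smul_comm, hpow j]
  have key : aeval T U.charpoly * D = 0 := by
    rw [haeval, U.aeval_self_charpoly, mul_zero]
  have hunit : IsUnit (aeval T U.charpoly) := by
    by_contra hn
    have hsplit : U.charpoly.Splits := IsAlgClosed.splits _
    have hfact := hsplit.eq_prod_roots_of_monic U.charpoly_monic
    rw [hfact] at hn
    obtain ⟨r, hrT, hr0⟩ := spectrum.exists_mem_of_not_isUnit_aeval_prod hn
    exact hdisj r hrT (mem_spectrum_of_isRoot_charpoly U hr0)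
  exact (hunit.mul_right_eq_zero).mp key

end SpectrumAux
section IntAux

variable {a b a' b' : Type*} [Fintype a] [Fintype b] [Fintype a'] [Fintype b'] {x y : ℝ}

lemma matInt_mul_left (L : Matrix a' a ℂ) (f : ℝ → Matrix a b ℂ) (c : ℂ)
    (hf : ∀ i j, IntervalIntegrable (fun ν => f ν i j) volume x y) :
    L * (Matrix.of fun i j => c * ∫ ν in x..y, f ν i j)
      = Matrix.of fun i j => c * ∫ ν in x..y, (L * f ν) i j := by
  ext i j
  simp only [Matrix.mul_apply, Matrix.of_apply]
  calc ∑ k, L i k * (c * ∫ ν in x..y, f ν k j)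
      = c * ∑ k, ∫ ν in x..y, L i k * f ν k j := by
        rw [Finset.mul_sum]
        refine Finset.sum_congr rfl fun k _ => ?_
        rw [intervalIntegral.integral_const_mul]; ring
    _ = c * ∫ ν in x..y, ∑ k, L i k * f ν k j := by
        rw [intervalIntegral.integral_finset_sum]
        exact fun k _ => (hf k j).const_mul _

lemma matInt_mul_right (K : Matrix b b' ℂ) (f : ℝ → Matrix a b ℂ) (c : ℂ)
    (hf : ∀ i j, IntervalIntegrable (fun ν => f ν i j) volume x y) :
    (Matrix.of fun i j => c * ∫ ν in x..y, f ν i j) * K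
      = Matrix.of fun i j => c * ∫ ν in x..y, (f ν * K) i j := by
  ext i j
  simp only [Matrix.mul_apply, Matrix.of_apply]
  calc ∑ k, (c * ∫ ν in x..y, f ν i k) * K k j
      = c * ∑ k, ∫ ν in x..y, f ν i k * K k j := by
        rw [Finset.mul_sum]
        refine Finset.sum_congr rfl fun k _ => ?_
        rw [intervalIntegral.integral_mul_const]; ring
    _ = c * ∫ ν in x..y, ∑ k, f ν i k * K k j := by
        rw [intervalIntegral.integral_finset_sum]
        exact fun k _ => (hf i k).mul_const _

lemma matInt_add (f g : ℝ → Matrix a b ℂ) (c : ℂ)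
    (hf : ∀ i j, IntervalIntegrable (fun ν => f ν i j) volume x y)
    (hg : ∀ i j, IntervalIntegrable (fun ν => g ν i j) volume x y) :
    (Matrix.of fun i j => c * ∫ ν in x..y, f ν i j)
      + (Matrix.of fun i j => c * ∫ ν in x..y, g ν i j)
      = Matrix.of fun i j => c * ∫ ν in x..y, (f ν + g ν) i j := by
  ext i j
  simp only [Matrix.add_apply, Matrix.of_apply]
  rw [intervalIntegral.integral_add (hf i j) (hg i j)]
  ring

lemma conj_intervalIntegral (f : ℝ → ℂ) (x y : ℝ) :
    (starRingEnd ℂ) (∫ ν in x..y, f ν) = ∫ ν in x..y, (starRingEnd ℂ) (f ν) := by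
  simp only [intervalIntegral, map_sub, ← integral_conj]

lemma matInt_conjTranspose (f : ℝ → Matrix a b ℂ) :
    (Matrix.of fun i j => (1 / (2 * (Real.pi : ℂ))) * ∫ ν in x..y, f ν i j)ᴴ
      = Matrix.of fun (i : b) (j : a) =>
          (1 / (2 * (Real.pi : ℂ))) * ∫ ν in x..y, (f ν)ᴴ i j := by
  have hc : (starRingEnd ℂ) (1 / (2 * (Real.pi : ℂ))) = 1 / (2 * (Real.pi : ℂ)) := by
    rw [map_div₀, _root_.map_one, _root_.map_mul, Complex.conj_ofReal, map_ofNat]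
  ext i j
  simp only [Matrix.conjTranspose_apply, Matrix.of_apply, star_mul']
  rw [show (star (1 / (2 * (Real.pi:ℂ)))) = 1 / (2 * (Real.pi:ℂ)) from hc,
    show (star (∫ ν in x..y, f ν j i) : ℂ) = (starRingEnd ℂ) (∫ ν in x..y, f ν j i) from rfl,
    conj_intervalIntegral]
  simp [Matrix.conjTranspose_apply]

end IntAux

lemma map_ofReal_conjTranspose {a b : Type*} (M : Matrix a b ℝ) :
    (M.map Complex.ofReal)ᴴ = (M.map Complex.ofReal)ᵀ := by
  ext i j
  simp [Matrix.conjTranspose_apply, Matrix.transpose_apply, Complex.conj_ofReal]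

/-- if `Y_ω` solves `Aᵀ Y_ω + Y_ω A + F_ω* Cᵀ C + Cᵀ C F_ω = 0`, then
`trace(Bᵀ Y_ω B) = trace((1/2π) ∫_{-ω}^{ω} G₁*(jν) G₁(jν) dν)` for
`G₁(s) = C (sI - A)⁻¹ B`. -/
theorem flimited_obs_gramian_trace
    {n m p : ℕ} (A : Matrix (Fin n) (Fin n) ℝ)
    (B : Matrix (Fin n) (Fin m) ℝ) (C : Matrix (Fin p) (Fin n) ℝ)
    (hA : ∀ μ ∈ spectrum ℂ (A.map Complex.ofReal), μ.re < 0)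
    (ω : ℝ) (hω : 0 < ω)
    (Yω : Matrix (Fin n) (Fin n) ℂ)
    (hY : (A.map Complex.ofReal)ᵀ * Yω + Yω * A.map Complex.ofReal
      + (Ffl (A.map Complex.ofReal) ω)ᴴ * ((C.map Complex.ofReal)ᵀ * C.map Complex.ofReal)
      + (C.map Complex.ofReal)ᵀ * C.map Complex.ofReal * Ffl (A.map Complex.ofReal) ω = 0) :
    ((B.map Complex.ofReal)ᵀ * Yω * B.map Complex.ofReal).trace
      = (Matrix.of fun i j => (1 / (2 * (Real.pi : ℂ))) *
          ∫ ν in (-ω)..ω,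
            ((C.map Complex.ofReal * resolvMat (A.map Complex.ofReal) ν * B.map Complex.ofReal)ᴴ
              * (C.map Complex.ofReal * resolvMat (A.map Complex.ofReal) ν * B.map Complex.ofReal)) i j :
          Matrix (Fin m) (Fin m) ℂ).trace := by
  set 𝔸 : Matrix (Fin n) (Fin n) ℂ := A.map Complex.ofReal with h𝔸def
  set 𝔹 : Matrix (Fin n) (Fin m) ℂ := B.map Complex.ofReal with h𝔹def
  set ℭ : Matrix (Fin p) (Fin n) ℂ := C.map Complex.ofReal with hℭdef
  set Q : Matrix (Fin n) (Fin n) ℂ := ℭᵀ * ℭ with hQdef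
  set c : ℂ := 1 / (2 * (Real.pi : ℂ)) with hcdef
  set R : ℝ → Matrix (Fin n) (Fin n) ℂ := fun ν => resolvMat 𝔸 ν with hRdef
  -- the "S" matrix
  set S : ℝ → Matrix (Fin n) (Fin n) ℂ :=
    fun ν => (Complex.I * (ν : ℂ)) • (1 : Matrix (Fin n) (Fin n) ℂ) - 𝔸 with hSdef
  -- invertibility of S ν
  have hSunit : ∀ ν : ℝ, IsUnit (S ν).det := by
    intro ν
    have hmem : (Complex.I * (ν : ℂ)) ∉ spectrum ℂ 𝔸 := by
      intro hmem
      have := hA _ hmem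
      simp [Complex.mul_re] at this
    rw [spectrum.notMem_iff, Algebra.algebraMap_eq_smul_one] at hmem
    rwa [Matrix.isUnit_iff_isUnit_det] at hmem
  have hRS : ∀ ν : ℝ, R ν * S ν = 1 := fun ν => Matrix.nonsing_inv_mul _ (hSunit ν)
  have hSR : ∀ ν : ℝ, S ν * R ν = 1 := fun ν => Matrix.mul_nonsing_inv _ (hSunit ν)
  -- continuity of the resolvent
  have hScont : Continuous S := by
    apply Continuous.sub _ continuous_const
    exact (continuous_const.mul Complex.continuous_ofReal).smul continuous_const
  have hRcont : Continuous R := by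
    have hdet : Continuous fun ν => (S ν).det := hScont.matrix_det
    have heq : R = fun ν => ((S ν).det)⁻¹ • (S ν).adjugate := by
      funext ν
      rw [hRdef]
      show (S ν)⁻¹ = _
      rw [Matrix.inv_def, Ring.inverse_eq_inv']
    rw [heq]
    exact (hdet.inv₀ fun ν => (hSunit ν).ne_zero).smul hScont.matrix_adjugate
  -- integrability helper
  have hInt : ∀ (f : ℝ → Matrix (Fin n) (Fin n) ℂ), Continuous f →
      ∀ (i j : Fin n), IntervalIntegrable (fun ν => f ν i j) volume (-ω) ω :=
    fun f hf i j => ((hf.matrix_elem i j)).intervalIntegrable _ _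
  -- basic conjugation facts
  have h𝔸H : 𝔸ᴴ = 𝔸ᵀ := by rw [h𝔸def]; exact map_ofReal_conjTranspose A
  have h𝔹H : 𝔹ᴴ = 𝔹ᵀ := by rw [h𝔹def]; exact map_ofReal_conjTranspose B
  have hℭH : ℭᴴ = ℭᵀ := by rw [hℭdef]; exact map_ofReal_conjTranspose C
  have hcconj : (starRingEnd ℂ) c = c := by
    rw [hcdef, map_div₀, _root_.map_one, _root_.map_mul, Complex.conj_ofReal, map_ofNat]
  -- the candidate Gramian
  set Yhat : Matrix (Fin n) (Fin n) ℂ :=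
    Matrix.of fun i j => c * ∫ ν in (-ω)..ω, ((R ν)ᴴ * Q * R ν) i j with hYhatdef
  have hgcont : Continuous fun ν => (R ν)ᴴ * Q * R ν :=
    (hRcont.matrix_conjTranspose.matrix_mul continuous_const).matrix_mul hRcont
  -- Ffl entrywise
  have hF : Ffl 𝔸 ω = Matrix.of fun i j => c * ∫ ν in (-ω)..ω, R ν i j := rfl
  have hFH : (Ffl 𝔸 ω)ᴴ
      = Matrix.of fun i j => c * ∫ ν in (-ω)..ω, (R ν)ᴴ i j := by
    rw [hF, hcdef]
    exact matInt_conjTranspose R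
  -- pointwise algebraic identity
  have hpt : ∀ ν : ℝ, 𝔸ᵀ * ((R ν)ᴴ * Q * R ν) + ((R ν)ᴴ * Q * R ν) * 𝔸
      + (R ν)ᴴ * Q + Q * R ν = 0 := by
    intro ν
    have h𝔸eq : 𝔸 = (Complex.I * (ν : ℂ)) • 1 - S ν := by
      rw [hSdef]; simp
    have hRA : R ν * 𝔸 = (Complex.I * (ν : ℂ)) • R ν - 1 := by
      calc R ν * 𝔸 = R ν * ((Complex.I * (ν : ℂ)) • 1 - S ν) := by rw [← h𝔸eq]
        _ = (Complex.I * (ν : ℂ)) • R ν - 1 := by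
            rw [Matrix.mul_sub, Matrix.mul_smul, Matrix.mul_one, hRS]
    have hAR : 𝔸ᵀ * (R ν)ᴴ = (-(Complex.I * (ν : ℂ))) • (R ν)ᴴ - 1 := by
      have hconj := congrArg Matrix.conjTranspose hRA
      rw [Matrix.conjTranspose_mul, Matrix.conjTranspose_sub, Matrix.conjTranspose_smul,
        Matrix.conjTranspose_one, h𝔸H] at hconj
      rw [hconj]
      congr 1
      congr 1
      simp [Complex.conj_ofReal]
    rw [show 𝔸ᵀ * ((R ν)ᴴ * Q * R ν) = (𝔸ᵀ * (R ν)ᴴ) * (Q * R ν) by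
          simp only [Matrix.mul_assoc],
      show ((R ν)ᴴ * Q * R ν) * 𝔸 = (R ν)ᴴ * Q * (R ν * 𝔸) by simp only [Matrix.mul_assoc],
      hAR, hRA]
    simp only [Matrix.sub_mul, Matrix.mul_sub, smul_mul_assoc, mul_smul_comm, neg_smul,
      neg_mul, one_mul, mul_one, Matrix.mul_assoc]
    abel
  -- families and their continuity
  have hf1cont : Continuous fun ν => 𝔸ᵀ * ((R ν)ᴴ * Q * R ν) :=
    continuous_const.matrix_mul hgcont
  have hf2cont : Continuous fun ν => ((R ν)ᴴ * Q * R ν) * 𝔸 :=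
    hgcont.matrix_mul continuous_const
  have hf3cont : Continuous fun ν => (R ν)ᴴ * Q :=
    hRcont.matrix_conjTranspose.matrix_mul continuous_const
  have hf4cont : Continuous fun ν => Q * R ν :=
    continuous_const.matrix_mul hRcont
  -- Yhat satisfies the same Lyapunov-type equation
  have hYhatEq : 𝔸ᵀ * Yhat + Yhat * 𝔸 + (Ffl 𝔸 ω)ᴴ * Q + Q * Ffl 𝔸 ω = 0 := by
    rw [hYhatdef, hFH, hF,
      matInt_mul_left 𝔸ᵀ _ c (hInt _ hgcont),
      matInt_mul_right 𝔸 _ c (hInt _ hgcont),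
      matInt_mul_right Q _ c (hInt _ hRcont.matrix_conjTranspose),
      matInt_mul_left Q _ c (hInt _ hRcont),
      matInt_add _ _ c (hInt _ hf1cont) (hInt _ hf2cont),
      matInt_add (fun ν => 𝔸ᵀ * ((R ν)ᴴ * Q * R ν) + (R ν)ᴴ * Q * R ν * 𝔸) _ c (hInt _ (hf1cont.add hf2cont)) (hInt _ hf3cont),
      matInt_add (fun ν => 𝔸ᵀ * ((R ν)ᴴ * Q * R ν) + (R ν)ᴴ * Q * R ν * 𝔸 + (R ν)ᴴ * Q) _ c (hInt _ ((hf1cont.add hf2cont).add hf3cont)) (hInt _ hf4cont)]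
    ext i j
    have hz : ∀ ν : ℝ,
        (𝔸ᵀ * ((R ν)ᴴ * Q * R ν) + ((R ν)ᴴ * Q * R ν) * 𝔸 + (R ν)ᴴ * Q + Q * R ν) i j
          = (0 : ℂ) := by
      intro ν; rw [hpt ν]; rfl
    simp only [Matrix.of_apply, Matrix.zero_apply, hz]
    simp
  -- uniqueness of the solution
  have hYY : Yω = Yhat := by
    have h0 : 𝔸ᵀ * (Yω - Yhat) + (Yω - Yhat) * 𝔸 = 0 := by
      calc 𝔸ᵀ * (Yω - Yhat) + (Yω - Yhat) * 𝔸
          = (𝔸ᵀ * Yω + Yω * 𝔸 + (Ffl 𝔸 ω)ᴴ * Q + Q * Ffl 𝔸 ω)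
            - (𝔸ᵀ * Yhat + Yhat * 𝔸 + (Ffl 𝔸 ω)ᴴ * Q + Q * Ffl 𝔸 ω) := by noncomm_ring
        _ = 0 := by rw [hY, hYhatEq, sub_zero]
    have hD : 𝔸ᵀ * (Yω - Yhat) = (Yω - Yhat) * (-𝔸) := by
      rw [Matrix.mul_neg]
      exact eq_neg_of_add_eq_zero_left h0
    have hdisj : ∀ μ ∈ spectrum ℂ 𝔸ᵀ, μ ∉ spectrum ℂ (-𝔸) := by
      intro μ hμ hμ'
      have h1 : μ.re < 0 := hA μ (by rwa [spectrum_transpose_eq] at hμ)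
      have h2 : -μ ∈ spectrum ℂ 𝔸 := by
        rw [← spectrum.neg_eq] at hμ'
        exact Set.mem_neg.mp hμ'
      have h3 := hA _ h2
      rw [Complex.neg_re] at h3
      linarith
    have hzero := sylvester_unique 𝔸ᵀ (-𝔸) (Yω - Yhat) hdisj hD
    rw [sub_eq_zero] at hzero
    exact hzero
  -- conclude
  rw [hYY]
  congr 1
  rw [hYhatdef,
    matInt_mul_left 𝔹ᵀ _ c (hInt _ hgcont),
    matInt_mul_right 𝔹 _ c (fun i j =>
      (((continuous_const.matrix_mul hgcont).matrix_elem i j)).intervalIntegrable _ _)]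
  ext i j
  simp only [Matrix.of_apply]
  congr 1
  apply intervalIntegral.integral_congr
  intro ν _
  show (𝔹ᵀ * ((R ν)ᴴ * Q * R ν) * 𝔹) i j = _
  have hmat : 𝔹ᵀ * ((R ν)ᴴ * Q * R ν) * 𝔹
      = (ℭ * resolvMat 𝔸 ν * 𝔹)ᴴ * (ℭ * resolvMat 𝔸 ν * 𝔹) := by
    have hRν : resolvMat 𝔸 ν = R ν := rfl
    rw [hRν, Matrix.conjTranspose_mul, Matrix.conjTranspose_mul, h𝔹H, hℭH, hQdef]
    simp only [Matrix.mul_assoc]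
  rw [hmat]
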